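/- For every positive integer d there exists a polynomial α_d ∈ ℤ[q] with constant coefficient 1, with degree exactly (d−1)d, and with the coefficient of q^{(d−1)d} equal to (−1)^{d−1}, such that the identity of formal power series A_d(q) · (q;q)_d = α_d(q) holds. -/

import Mathlib

/-- `a d n`: the number of tuples `(k₁, …, k_d)` of nonnegative integers summing to `n`
with `k_{j} ≤ k_{j-1} + 1` for `j ∈ {2, …, d}`. -/
def a (d n : ℕ) : ℕ :=
  Finset.card ((Finset.univ : Finset (Fin d → Fin (n + 1))).filter fun t =>
    (∑ i, (t i : ℕ)) = n ∧
    ∀ i : Fin d, ∀ h : i.val + 1 < d, (t ⟨i.val + 1, h⟩ : ℕ) ≤ (t i : ℕ) + 1)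

/-- `A d` is the generating function of `a d`. -/
noncomputable def A (d : ℕ) : PowerSeries ℤ := PowerSeries.mk fun n => (a d n : ℤ)

/-- The `q`-Pochhammer symbol `(q;q)_k = ∏_{r=1}^k (1 - q^r)` as a polynomial over `ℤ`. -/
noncomputable def qPochPoly (k : ℕ) : Polynomial ℤ :=
  ∏ r ∈ Finset.Icc 1 k, (1 - Polynomial.X ^ r)

open Finset Polynomial

namespace AdAux


/-- Valid tuples of length `d+1` with weight `(∑ k) + j * k_last = n`. -/
def W (d j n : ℕ) : Finset (Fin (d + 1) → ℕ) :=
  (Fintype.piFinset fun _ : Fin (d + 1) => Finset.range (n + 1)).filter fun t =>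
    ((∑ i, t i) + j * t (Fin.last d) = n) ∧ ∀ i : Fin d, t i.succ ≤ t i.castSucc + 1

lemma mem_W {d j n : ℕ} {t : Fin (d + 1) → ℕ} :
    t ∈ W d j n ↔ ((∑ i, t i) + j * t (Fin.last d) = n) ∧
      ∀ i : Fin d, t i.succ ≤ t i.castSucc + 1 := by
  constructor
  · intro h; exact (Finset.mem_filter.1 h).2
  · intro h
    refine Finset.mem_filter.2 ⟨Fintype.mem_piFinset.2 fun i => ?_, h⟩
    have h1 : t i ≤ ∑ k, t k :=
      Finset.single_le_sum (fun k _ => Nat.zero_le (t k)) (Finset.mem_univ i)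
    have h2 : (∑ k, t k) + j * t (Fin.last d) = n := h.1
    have h3 : (∑ k, t k) ≤ n := Nat.le.intro h2
    exact Finset.mem_range.2 (Nat.lt_succ_of_le (le_trans h1 h3))

noncomputable def Hs (d j : ℕ) : PowerSeries ℤ := PowerSeries.mk fun n => ((W d j n).card : ℤ)

lemma W_zero (j n : ℕ) :
    W 0 j n = if (j + 1) ∣ n then {fun _ => n / (j + 1)} else ∅ := by
  have : Subsingleton (Fin (0 + 1)) := Fin.subsingleton_one
  ext t
  rw [mem_W]
  have hl : (Fin.last 0) = (0 : Fin 1) := rfl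
  have hsum : ∀ u : Fin (0 + 1) → ℕ, (∑ i, u i) = u 0 := fun u => by
    simp [Fin.sum_univ_succ]
  constructor
  · rintro ⟨h1, -⟩
    rw [hsum, hl] at h1
    have hmul : (j + 1) * t 0 = n := by rw [Nat.succ_mul, Nat.add_comm]; exact h1
    have hdvd : (j + 1) ∣ n := ⟨t 0, hmul.symm⟩
    rw [if_pos hdvd]
    refine Finset.mem_singleton.2 (funext fun i => ?_)
    have hi : i = 0 := Subsingleton.elim i 0
    subst hi
    rw [← hmul, Nat.mul_div_cancel_left _ (Nat.succ_pos j)]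
  · intro ht
    by_cases hdvd : (j + 1) ∣ n
    · rw [if_pos hdvd] at ht
      have := Finset.mem_singleton.1 ht
      subst this
      have hmul : (j + 1) * (n / (j + 1)) = n := Nat.mul_div_cancel' hdvd
      rw [Nat.succ_mul] at hmul
      constructor
      · rw [hsum, hl]; show n / (j + 1) + j * (n / (j + 1)) = n; omega
      · intro i; exact absurd i.isLt (by omega)
    · rw [if_neg hdvd] at ht; exact absurd ht (Finset.notMem_empty t)

lemma card_W_zero (j n : ℕ) :
    ((W 0 j n).card : ℤ) = if (j + 1) ∣ n then 1 else 0 := by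
  rw [W_zero]; split <;> simp

lemma L1 (j : ℕ) : Hs 0 j * (1 - (PowerSeries.X : PowerSeries ℤ) ^ (j + 1)) = 1 := by
  ext n
  rw [mul_sub, mul_one, map_sub, PowerSeries.coeff_mul_X_pow']
  simp only [Hs, PowerSeries.coeff_mk, PowerSeries.coeff_one, card_W_zero]
  by_cases h0 : n = 0
  · subst h0
    rw [if_pos (dvd_zero _), if_neg (by omega), if_pos rfl]; ring
  · rw [if_neg h0]
    by_cases hd : (j + 1) ∣ n
    · have hle : j + 1 ≤ n := Nat.le_of_dvd (Nat.pos_of_ne_zero h0) hd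
      rw [if_pos hd, if_pos hle, if_pos (Nat.dvd_sub hd dvd_rfl)]; ring
    · rw [if_neg hd]
      by_cases hle : j + 1 ≤ n
      · rw [if_pos hle, if_neg, sub_zero]
        intro hcon
        exact hd (by have := Nat.dvd_add hcon (dvd_refl (j + 1)); rwa [Nat.sub_add_cancel hle] at this)
      · rw [if_neg hle, sub_zero]

lemma sum_update_last {d : ℕ} (t : Fin (d + 1 + 1) → ℕ) (v : ℕ) :
    (∑ i, Function.update t (Fin.last (d + 1)) v i) + t (Fin.last (d + 1))
      = (∑ i, t i) + v := by
  rw [Fin.sum_univ_castSucc (f := Function.update t (Fin.last (d + 1)) v),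
    Fin.sum_univ_castSucc (f := t)]
  have h1 : ∀ i : Fin (d + 1),
      Function.update t (Fin.last (d + 1)) v i.castSucc = t i.castSucc := fun i =>
    Function.update_of_ne (Fin.castSucc_lt_last i).ne v t
  rw [Finset.sum_congr rfl fun i _ => h1 i, Function.update_self]
  omega

lemma valid_update_last {d : ℕ} {t : Fin (d + 1 + 1) → ℕ}
    (hval : ∀ i : Fin (d + 1), t i.succ ≤ t i.castSucc + 1) {v : ℕ}
    (hv : v ≤ t ((Fin.last d).castSucc) + 1) :
    ∀ i : Fin (d + 1), (Function.update t (Fin.last (d + 1)) v) i.succ ≤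
      (Function.update t (Fin.last (d + 1)) v) i.castSucc + 1 := by
  intro i
  rw [Function.update_of_ne (Fin.castSucc_lt_last i).ne]
  rcases eq_or_ne i (Fin.last d) with rfl | hne
  · rw [Fin.succ_last, Function.update_self]; exact hv
  · rw [Function.update_of_ne (fun hc => hne (by
      have : i.succ = (Fin.last d).succ := by rw [hc, Fin.succ_last]
      exact Fin.succ_injective _ this))]
    exact hval i

lemma weight_lower {d j n : ℕ} {t : Fin (d + 1 + 1) → ℕ} (ht : t ∈ W (d + 1) j n)
    (h1 : 1 ≤ t (Fin.last (d + 1))) : j + 1 ≤ n := by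
  obtain ⟨hsum, -⟩ := mem_W.1 ht
  have h2 : t (Fin.last (d + 1)) ≤ ∑ k : Fin (d + 1 + 1), t k :=
    Finset.single_le_sum (fun k _ => Nat.zero_le (t k)) (Finset.mem_univ _)
  have h3 : j * 1 ≤ j * t (Fin.last (d + 1)) := Nat.mul_le_mul_left j h1
  omega

/-- C1: split off the tuples with last coordinate zero. -/
lemma card_W_split (d j n : ℕ) :
    (W (d + 1) j n).card = (W d 0 n).card +
      ((W (d + 1) j n).filter fun t => ¬ t (Fin.last (d + 1)) = 0).card := by
  rw [← Finset.card_filter_add_card_filter_not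
    (p := fun t => t (Fin.last (d + 1)) = 0) (s := W (d + 1) j n)]
  congr 1
  apply Finset.card_bij (i := fun t _ => t ∘ Fin.castSucc)
  · intro t ht
    obtain ⟨htW, h0⟩ := Finset.mem_filter.1 ht
    obtain ⟨hsum, hval⟩ := mem_W.1 htW
    rw [Fin.sum_univ_castSucc (f := t)] at hsum
    have hj0 : j * t (Fin.last (d + 1)) = 0 := by rw [h0, Nat.mul_zero]
    refine mem_W.2 ⟨?_, ?_⟩
    · show (∑ i : Fin (d + 1), t i.castSucc) + 0 * ((t ∘ Fin.castSucc) (Fin.last d)) = n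
      omega
    · intro i
      have := hval i.castSucc
      rwa [Fin.succ_castSucc] at this
  · intro t1 h1 t2 h2 heq
    obtain ⟨-, h10⟩ := Finset.mem_filter.1 h1
    obtain ⟨-, h20⟩ := Finset.mem_filter.1 h2
    funext i
    induction i using Fin.lastCases with
    | last => rw [h10, h20]
    | cast k => exact congrFun heq k
  · intro u hu
    obtain ⟨hsum, hval⟩ := mem_W.1 hu
    rw [Nat.zero_mul, Nat.add_zero] at hsum
    refine ⟨Fin.snoc u 0, Finset.mem_filter.2 ⟨mem_W.2 ⟨?_, ?_⟩, by simp⟩, ?_⟩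
    · rw [Fin.sum_univ_castSucc (f := Fin.snoc u 0)]
      simp only [Fin.snoc_castSucc, Fin.snoc_last]
      simpa using hsum
    · intro i
      induction i using Fin.lastCases with
      | last => simp [Fin.succ_last, Fin.snoc_last]
      | cast k =>
        rw [Fin.succ_castSucc, Fin.snoc_castSucc, Fin.snoc_castSucc]
        exact hval k
    · funext i; simp

/-- C2: subtracting one from a positive last coordinate. -/
lemma card_pos_eq (d j m : ℕ) :
    ((W (d + 1) j (m + (j + 1))).filter fun t => ¬ t (Fin.last (d + 1)) = 0).card =
    ((W (d + 1) j m).filter fun t =>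
      t (Fin.last (d + 1)) ≤ t ((Fin.last d).castSucc)).card := by
  refine Finset.card_bij'
    (fun t _ => Function.update t (Fin.last (d + 1)) (t (Fin.last (d + 1)) - 1))
    (fun t _ => Function.update t (Fin.last (d + 1)) (t (Fin.last (d + 1)) + 1))
    ?_ ?_ ?_ ?_
  · -- maps into RHS
    intro t ht
    obtain ⟨htW, h0⟩ := Finset.mem_filter.1 ht
    obtain ⟨hsum, hval⟩ := mem_W.1 htW
    have hlast : t (Fin.last (d + 1)) ≤ t ((Fin.last d).castSucc) + 1 := by
      have := hval (Fin.last d); rwa [Fin.succ_last] at this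
    have hup := sum_update_last t (t (Fin.last (d + 1)) - 1)
    refine Finset.mem_filter.2 ⟨mem_W.2 ⟨?_, ?_⟩, ?_⟩
    · beta_reduce
      rw [Function.update_self]
      have hmul : j * t (Fin.last (d + 1)) = j * (t (Fin.last (d + 1)) - 1) + j := by
        have h2 : t (Fin.last (d + 1)) - 1 + 1 = t (Fin.last (d + 1)) := by omega
        rw [← h2, Nat.mul_succ, h2]
      omega
    · beta_reduce; exact valid_update_last hval (by omega)
    · beta_reduce
      rw [Function.update_self,
        Function.update_of_ne (Fin.castSucc_lt_last (Fin.last d)).ne]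
      omega
  · -- maps back into LHS
    intro t ht
    obtain ⟨htW, hle⟩ := Finset.mem_filter.1 ht
    obtain ⟨hsum, hval⟩ := mem_W.1 htW
    have hup := sum_update_last t (t (Fin.last (d + 1)) + 1)
    refine Finset.mem_filter.2 ⟨mem_W.2 ⟨?_, ?_⟩, ?_⟩
    · beta_reduce
      rw [Function.update_self, Nat.mul_succ]
      omega
    · beta_reduce; exact valid_update_last hval (by omega)
    · beta_reduce; rw [Function.update_self]; omega
  · intro t ht
    obtain ⟨-, h0⟩ := Finset.mem_filter.1 ht
    beta_reduce
    rw [Function.update_self, Function.update_idem]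
    have : t (Fin.last (d + 1)) - 1 + 1 = t (Fin.last (d + 1)) := by omega
    rw [this, Function.update_eq_self]
  · intro t ht
    beta_reduce
    rw [Function.update_self, Function.update_idem]
    have : t (Fin.last (d + 1)) + 1 - 1 = t (Fin.last (d + 1)) := by omega
    rw [this, Function.update_eq_self]

/-- C3: split according to last vs. penultimate. -/
lemma card_split_le (d j m : ℕ) :
    (W (d + 1) j m).card =
      ((W (d + 1) j m).filter fun t =>
        t (Fin.last (d + 1)) ≤ t ((Fin.last d).castSucc)).card +
      ((W (d + 1) j m).filter fun t =>
        t (Fin.last (d + 1)) = t ((Fin.last d).castSucc) + 1).card := by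
  rw [← Finset.card_filter_add_card_filter_not
    (p := fun t => t (Fin.last (d + 1)) ≤ t ((Fin.last d).castSucc)) (s := W (d + 1) j m)]
  congr 2
  apply Finset.filter_congr
  intro t ht
  obtain ⟨-, hval⟩ := mem_W.1 ht
  have h2 : t (Fin.last (d + 1)) ≤ t ((Fin.last d).castSucc) + 1 := by
    have h := hval (Fin.last d); rw [Fin.succ_last] at h; exact h
  constructor
  · intro h; omega
  · intro h; omega

/-- C4: tuples whose last coordinate exceeds the penultimate by one. -/
lemma card_eq_step (d j m : ℕ) :
    ((W (d + 1) j (m + (j + 1))).filter fun t =>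
      t (Fin.last (d + 1)) = t ((Fin.last d).castSucc) + 1).card =
    (W d (j + 1) m).card := by
  apply Finset.card_bij (i := fun t _ => t ∘ Fin.castSucc)
  · intro t ht
    obtain ⟨htW, hstep⟩ := Finset.mem_filter.1 ht
    obtain ⟨hsum, hval⟩ := mem_W.1 htW
    rw [Fin.sum_univ_castSucc (f := t)] at hsum
    refine mem_W.2 ⟨?_, ?_⟩
    · show (∑ i : Fin (d + 1), t i.castSucc) + (j + 1) * t ((Fin.last d).castSucc) = m
      rw [hstep, Nat.mul_succ] at hsum
      have : (j + 1) * t ((Fin.last d).castSucc)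
          = j * t ((Fin.last d).castSucc) + t ((Fin.last d).castSucc) := by
        rw [Nat.succ_mul]
      omega
    · intro i
      have := hval i.castSucc
      rwa [Fin.succ_castSucc] at this
  · intro t1 h1 t2 h2 heq
    obtain ⟨-, h10⟩ := Finset.mem_filter.1 h1
    obtain ⟨-, h20⟩ := Finset.mem_filter.1 h2
    funext i
    induction i using Fin.lastCases with
    | last =>
      rw [h10, h20]
      have := congrFun heq (Fin.last d)
      simp only [Function.comp_apply] at this
      rw [this]
    | cast k => exact congrFun heq k
  · intro u hu
    obtain ⟨hsum, hval⟩ := mem_W.1 hu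
    refine ⟨Fin.snoc u (u (Fin.last d) + 1), Finset.mem_filter.2 ⟨mem_W.2 ⟨?_, ?_⟩, ?_⟩, ?_⟩
    · rw [Fin.sum_univ_castSucc (f := Fin.snoc u (u (Fin.last d) + 1))]
      simp only [Fin.snoc_castSucc, Fin.snoc_last]
      rw [Nat.succ_mul] at hsum
      rw [Nat.mul_succ]
      omega
    · intro i
      induction i using Fin.lastCases with
      | last =>
        rw [Fin.succ_last]
        simp only [Fin.snoc_last, Fin.snoc_castSucc]
        exact le_refl _
      | cast k =>
        rw [Fin.succ_castSucc, Fin.snoc_castSucc, Fin.snoc_castSucc]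
        exact hval k
    · simp only [Fin.snoc_last, Fin.snoc_castSucc]
    · funext i; simp

-- appended to part2 content

lemma filter_pos_empty (d j n : ℕ) (h : n < j + 1) :
    ((W (d + 1) j n).filter fun t => ¬ t (Fin.last (d + 1)) = 0) = ∅ := by
  rw [Finset.filter_eq_empty_iff]
  intro t ht hpos
  exact absurd (weight_lower ht (by omega)) (by omega)

lemma filter_step_empty (d j n : ℕ) (h : n < j + 1) :
    ((W (d + 1) j n).filter fun t =>
      t (Fin.last (d + 1)) = t ((Fin.last d).castSucc) + 1) = ∅ := by
  rw [Finset.filter_eq_empty_iff]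
  intro t ht hstep
  exact absurd (weight_lower ht (by omega)) (by omega)

lemma key_nat (d j n : ℕ) :
    (W (d + 1) j n).card + (if 2 * j + 2 ≤ n then (W d (j + 1) (n - (2 * j + 2))).card else 0)
      = (W d 0 n).card + (if j + 1 ≤ n then (W (d + 1) j (n - (j + 1))).card else 0) := by
  rcases lt_or_ge n (j + 1) with h | h
  · rw [if_neg (by omega), if_neg (by omega), card_W_split d j n, filter_pos_empty d j n h]
    simp
  · obtain ⟨m, rfl⟩ : ∃ m, n = m + (j + 1) := ⟨n - (j + 1), by omega⟩
    rw [if_pos (show j + 1 ≤ m + (j + 1) by omega),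
      show m + (j + 1) - (j + 1) = m from by omega]
    rcases lt_or_ge m (j + 1) with h2 | h2
    · rw [if_neg (show ¬ (2 * j + 2 ≤ m + (j + 1)) by omega)]
      have e1 := card_W_split d j (m + (j + 1))
      rw [card_pos_eq d j m] at e1
      have e2 := card_split_le d j m
      have e3 := filter_step_empty d j m h2
      rw [e3, Finset.card_empty] at e2
      linarith [e1, e2]
    · obtain ⟨m', rfl⟩ : ∃ m', m = m' + (j + 1) := ⟨m - (j + 1), by omega⟩
      rw [if_pos (show 2 * j + 2 ≤ m' + (j + 1) + (j + 1) by omega),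
        show m' + (j + 1) + (j + 1) - (2 * j + 2) = m' from by omega]
      have e1 := card_W_split d j (m' + (j + 1) + (j + 1))
      rw [card_pos_eq d j (m' + (j + 1))] at e1
      have e2 := card_split_le d j (m' + (j + 1))
      have e4 := card_eq_step d j m'
      linarith [e1, e2, e4]

lemma L2 (d j : ℕ) :
    Hs (d + 1) j + Hs d (j + 1) * (PowerSeries.X : PowerSeries ℤ) ^ (2 * j + 2)
      = Hs d 0 + Hs (d + 1) j * (PowerSeries.X : PowerSeries ℤ) ^ (j + 1) := by
  ext n
  rw [map_add, map_add, PowerSeries.coeff_mul_X_pow', PowerSeries.coeff_mul_X_pow']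
  simp only [Hs, PowerSeries.coeff_mk]
  have hk := key_nat d j n
  rcases le_or_gt (2 * j + 2) n with h1 | h1 <;> rcases le_or_gt (j + 1) n with h2 | h2
  · rw [if_pos h1, if_pos h2] at hk ⊢
    exact_mod_cast hk
  · omega
  · rw [if_neg (by omega), if_pos h2] at hk ⊢
    exact_mod_cast hk
  · rw [if_neg (by omega), if_neg (by omega)] at hk ⊢
    exact_mod_cast hk

lemma L2sub (d j : ℕ) :
    Hs (d + 1) j * (1 - (PowerSeries.X : PowerSeries ℤ) ^ (j + 1))
      = Hs d 0 - Hs d (j + 1) * (PowerSeries.X : PowerSeries ℤ) ^ (2 * j + 2) := by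
  linear_combination (L2 d j)

/-- `(q;q)_m` as a polynomial. -/
noncomputable def P (m : ℕ) : Polynomial ℤ := ∏ r ∈ Finset.range m, (1 - Polynomial.X ^ (r + 1))

lemma P_zero : P 0 = 1 := by simp [P]

lemma P_succ (m : ℕ) : P (m + 1) = P m * (1 - Polynomial.X ^ (m + 1)) :=
  Finset.prod_range_succ _ m

lemma one_sub_X_pow_ne_zero (r : ℕ) : (1 - Polynomial.X ^ (r + 1) : Polynomial ℤ) ≠ 0 := by
  intro h
  have := congrArg (fun p => Polynomial.coeff p 0) h
  simp [Polynomial.coeff_X_pow] at this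

lemma P_ne_zero (m : ℕ) : P m ≠ 0 := by
  induction m with
  | zero => simp [P_zero]
  | succ m ih => rw [P_succ]; exact mul_ne_zero ih (one_sub_X_pow_ne_zero m)

lemma P_coeff_zero (m : ℕ) : (P m).coeff 0 = 1 := by
  induction m with
  | zero => simp [P_zero]
  | succ m ih =>
    rw [P_succ, Polynomial.mul_coeff_zero, ih]
    simp [Polynomial.coeff_X_pow]

/-- Gaussian binomial coefficients via the `q`-Pascal recursion. -/
noncomputable def B : ℕ → ℕ → Polynomial ℤ
  | _, 0 => 1
  | 0, _ + 1 => 0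
  | n + 1, k + 1 => B n k + Polynomial.X ^ (k + 1) * B n (k + 1)

lemma B_zero_right (n : ℕ) : B n 0 = 1 := by cases n <;> rfl

lemma B_eq_zero_of_lt : ∀ {n k : ℕ}, n < k → B n k = 0 := by
  intro n
  induction n with
  | zero => intro k hk; match k, hk with | k + 1, _ => rfl
  | succ n ih =>
    intro k hk
    match k, hk with
    | k + 1, hk =>
      show B n k + Polynomial.X ^ (k + 1) * B n (k + 1) = 0
      rw [ih (by omega), ih (by omega), mul_zero, add_zero]

lemma B_self : ∀ n : ℕ, B n n = 1 := by
  intro n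
  induction n with
  | zero => rfl
  | succ n ih =>
    show B n n + Polynomial.X ^ (n + 1) * B n (n + 1) = 1
    rw [ih, B_eq_zero_of_lt (by omega), mul_zero, add_zero]

lemma B_mul_P : ∀ n k l : ℕ, k + l = n → B n k * (P k * P l) = P n := by
  intro n
  induction n with
  | zero =>
    intro k l h
    obtain ⟨rfl, rfl⟩ : k = 0 ∧ l = 0 := by omega
    simp [B_zero_right, P_zero]
  | succ n ih =>
    intro k l h
    match k with
    | 0 =>
      obtain rfl : l = n + 1 := by omega
      simp [B_zero_right, P_zero]
    | k + 1 =>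
      match l with
      | 0 =>
        obtain rfl : k = n := by omega
        simp [B_self, P_zero]
      | l + 1 =>
        have hn : k + l + 1 = n := by omega
        have IH1 := ih k (l + 1) (by omega)
        have IH2 := ih (k + 1) l (by omega)
        show (B n k + Polynomial.X ^ (k + 1) * B n (k + 1)) * (P (k + 1) * P (l + 1)) = P (n + 1)
        rw [P_succ k, P_succ l, P_succ n]
        rw [P_succ l] at IH1
        rw [P_succ k] at IH2
        have hX : (Polynomial.X : Polynomial ℤ) ^ (n + 1)
            = Polynomial.X ^ (k + 1) * Polynomial.X ^ (l + 1) := by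
          rw [← pow_add]; congr 1; omega
        rw [hX]
        linear_combination (1 - Polynomial.X ^ (k + 1)) * IH1
          + Polynomial.X ^ (k + 1) * (1 - Polynomial.X ^ (l + 1)) * IH2

lemma B_coeff_zero : ∀ n k : ℕ, k ≤ n → (B n k).coeff 0 = 1 := by
  intro n
  induction n with
  | zero =>
    intro k hk
    match k, hk with
    | 0, _ => simp [B_zero_right]
  | succ n ih =>
    intro k hk
    match k with
    | 0 => simp [B_zero_right]
    | k + 1 =>
      have hB : B (n + 1) (k + 1) = B n k + Polynomial.X ^ (k + 1) * B n (k + 1) := rfl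
      rw [hB, Polynomial.coeff_add, Polynomial.mul_coeff_zero, ih k (by omega)]
      simp [Polynomial.coeff_X_pow]

lemma B_natDegree_le : ∀ n k : ℕ, (B n k).natDegree ≤ k * (n - k) := by
  intro n
  induction n with
  | zero =>
    intro k
    match k with
    | 0 => simp [B_zero_right]
    | k + 1 => rw [B_eq_zero_of_lt (by omega)]; simp
  | succ n ih =>
    intro k
    match k with
    | 0 => simp [B_zero_right]
    | k + 1 =>
      show (B n k + Polynomial.X ^ (k + 1) * B n (k + 1)).natDegree ≤ (k + 1) * (n + 1 - (k + 1))
      rcases le_or_gt (k + 1) n with hkn | hkn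
      · refine le_trans (Polynomial.natDegree_add_le _ _) (max_le ?_ ?_)
        · exact le_trans (ih k) (by
            have : n - k = n + 1 - (k + 1) := by omega
            rw [this]; exact Nat.mul_le_mul_right _ (by omega))
        · refine le_trans (Polynomial.natDegree_mul_le) ?_
          have h1 : (Polynomial.X ^ (k + 1) : Polynomial ℤ).natDegree = k + 1 := by
            simp [Polynomial.natDegree_X_pow]
          rw [h1]
          have h2 := ih (k + 1)
          have h3 : (k + 1) * (n - (k + 1)) + (k + 1) = (k + 1) * (n + 1 - (k + 1)) := by
            have : n - (k + 1) + 1 = n + 1 - (k + 1) := by omega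
            rw [← this, Nat.mul_succ]
          omega
      · rw [B_eq_zero_of_lt hkn, mul_zero, add_zero]
        refine le_trans (ih k) ?_
        have h0 : n - k = 0 := by omega
        rw [h0, Nat.mul_zero]
        exact Nat.zero_le _

/-- Product `∏_{r=0}^{e} (1 - X^{j+r+1})`. -/
noncomputable def poch (j e : ℕ) : Polynomial ℤ :=
  ∏ r ∈ Finset.range (e + 1), (1 - Polynomial.X ^ (j + r + 1))

lemma poch_zero_eq (e : ℕ) : poch 0 e = P (e + 1) := by
  unfold poch P
  exact Finset.prod_congr rfl fun r _ => by rw [Nat.zero_add]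

lemma P_mul_poch (j e : ℕ) : P j * poch j e = P (j + e + 1) := by
  unfold P poch
  rw [← Finset.prod_range_add]
  have h : j + (e + 1) = j + e + 1 := by omega
  rw [h]

lemma poch_succ_eq (j e : ℕ) : poch (j + 1) e = B (j + e + 2) (j + 1) * P (e + 1) := by
  have h1 : P (j + 1) * poch (j + 1) e = P (j + e + 2) := by
    rw [P_mul_poch]; congr 1; omega
  have h2 : B (j + e + 2) (j + 1) * (P (j + 1) * P (e + 1)) = P (j + e + 2) :=
    B_mul_P _ _ _ (by omega)
  apply mul_left_cancel₀ (P_ne_zero (j + 1))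
  rw [h1, ← h2]; ring

lemma poch_split (j e : ℕ) :
    poch j (e + 1) = (1 - Polynomial.X ^ (j + 1)) * poch (j + 1) e := by
  unfold poch
  rw [Finset.prod_range_succ']
  rw [Finset.prod_congr rfl fun r _ => by
    rw [show j + (r + 1) + 1 = j + 1 + r + 1 from by omega]]
  rw [mul_comm]

/-- The numerator polynomials. -/
noncomputable def beta : ℕ → ℕ → Polynomial ℤ
  | 0, _ => 1
  | e + 1, j => beta e 0 * B (j + e + 2) (j + 1) - Polynomial.X ^ (2 * j + 2) * beta e (j + 1)

lemma beta_coeff_zero : ∀ e j : ℕ, (beta e j).coeff 0 = 1 := by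
  intro e
  induction e with
  | zero => intro j; simp [beta]
  | succ e ih =>
    intro j
    rw [show beta (e + 1) j = beta e 0 * B (j + e + 2) (j + 1)
      - Polynomial.X ^ (2 * j + 2) * beta e (j + 1) from rfl]
    rw [Polynomial.coeff_sub, Polynomial.mul_coeff_zero, Polynomial.mul_coeff_zero,
      ih 0, B_coeff_zero _ _ (by omega)]
    simp [Polynomial.coeff_X_pow]

lemma beta_natDegree_le : ∀ e j : ℕ, (beta e j).natDegree ≤ e * (e + 1) + 2 * e * j := by
  intro e
  induction e with
  | zero => intro j; simp [beta]
  | succ e ih =>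
    intro j
    rw [show beta (e + 1) j = beta e 0 * B (j + e + 2) (j + 1)
      - Polynomial.X ^ (2 * j + 2) * beta e (j + 1) from rfl]
    show (beta e 0 * B (j + e + 2) (j + 1) - Polynomial.X ^ (2 * j + 2) * beta e (j + 1)).natDegree
      ≤ (e + 1) * (e + 2) + 2 * (e + 1) * j
    refine le_trans (Polynomial.natDegree_sub_le _ _) (max_le ?_ ?_)
    · refine le_trans (Polynomial.natDegree_mul_le) ?_
      have h1 := ih 0
      have h2 := B_natDegree_le (j + e + 2) (j + 1)
      have h3 : (j + 1) * (j + e + 2 - (j + 1)) = (j + 1) * (e + 1) := by congr 1; omega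
      rw [h3] at h2
      nlinarith [h1, h2]
    · refine le_trans (Polynomial.natDegree_mul_le) ?_
      have h1 := ih (j + 1)
      have h2 : (Polynomial.X ^ (2 * j + 2) : Polynomial ℤ).natDegree = 2 * j + 2 := by
        simp [Polynomial.natDegree_X_pow]
      rw [h2]
      nlinarith [h1]

lemma beta_coeff_top : ∀ e j : ℕ, (beta e j).coeff (e * (e + 1) + 2 * e * j) = (-1) ^ e := by
  intro e
  induction e with
  | zero => intro j; simp [beta]
  | succ e ih =>
    intro j
    rw [show beta (e + 1) j = beta e 0 * B (j + e + 2) (j + 1)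
      - Polynomial.X ^ (2 * j + 2) * beta e (j + 1) from rfl]
    show (beta e 0 * B (j + e + 2) (j + 1) - Polynomial.X ^ (2 * j + 2) * beta e (j + 1)).coeff
      ((e + 1) * (e + 2) + 2 * (e + 1) * j) = (-1) ^ (e + 1)
    rw [Polynomial.coeff_sub]
    have hfirst : (beta e 0 * B (j + e + 2) (j + 1)).coeff
        ((e + 1) * (e + 2) + 2 * (e + 1) * j) = 0 := by
      apply Polynomial.coeff_eq_zero_of_natDegree_lt
      refine lt_of_le_of_lt (Polynomial.natDegree_mul_le) ?_
      have h1 := beta_natDegree_le e 0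
      have h2 := B_natDegree_le (j + e + 2) (j + 1)
      have h3 : (j + 1) * (j + e + 2 - (j + 1)) = (j + 1) * (e + 1) := by congr 1; omega
      rw [h3] at h2
      nlinarith [h1, h2]
    have hD : (e + 1) * (e + 2) + 2 * (e + 1) * j
        = (e * (e + 1) + 2 * e * (j + 1)) + (2 * j + 2) := by ring
    rw [hfirst, hD, Polynomial.coeff_X_pow_mul, ih (j + 1)]
    ring

/-- The main identity. -/
lemma main : ∀ e j : ℕ,
    Hs e j * ((poch j e : Polynomial ℤ) : PowerSeries ℤ)
      = ((beta e j : Polynomial ℤ) : PowerSeries ℤ) := by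
  intro e
  induction e with
  | zero =>
    intro j
    have hp : poch j 0 = 1 - Polynomial.X ^ (j + 1) := by
      unfold poch; rw [Finset.prod_range_one]
    rw [hp]
    have : ((1 - Polynomial.X ^ (j + 1) : Polynomial ℤ) : PowerSeries ℤ)
        = 1 - (PowerSeries.X : PowerSeries ℤ) ^ (j + 1) := by
      rw [Polynomial.coe_sub, Polynomial.coe_one, Polynomial.coe_pow, Polynomial.coe_X]
    rw [this, L1 j] <;> simp [beta, Polynomial.coe_one]
  | succ e ih =>
    intro j
    rw [poch_split j e, Polynomial.coe_mul]
    have hc : ((1 - Polynomial.X ^ (j + 1) : Polynomial ℤ) : PowerSeries ℤ)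
        = 1 - (PowerSeries.X : PowerSeries ℤ) ^ (j + 1) := by
      rw [Polynomial.coe_sub, Polynomial.coe_one, Polynomial.coe_pow, Polynomial.coe_X]
    calc Hs (e + 1) j * (((1 - Polynomial.X ^ (j + 1) : Polynomial ℤ) : PowerSeries ℤ)
            * ((poch (j + 1) e : Polynomial ℤ) : PowerSeries ℤ))
        = (Hs (e + 1) j * (1 - (PowerSeries.X : PowerSeries ℤ) ^ (j + 1)))
            * ((poch (j + 1) e : Polynomial ℤ) : PowerSeries ℤ) := by rw [hc]; ring
      _ = (Hs e 0 - Hs e (j + 1) * (PowerSeries.X : PowerSeries ℤ) ^ (2 * j + 2))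
            * ((poch (j + 1) e : Polynomial ℤ) : PowerSeries ℤ) := by rw [L2sub]
      _ = Hs e 0 * ((poch (j + 1) e : Polynomial ℤ) : PowerSeries ℤ)
            - (PowerSeries.X : PowerSeries ℤ) ^ (2 * j + 2)
              * (Hs e (j + 1) * ((poch (j + 1) e : Polynomial ℤ) : PowerSeries ℤ)) := by ring
      _ = ((beta (e + 1) j : Polynomial ℤ) : PowerSeries ℤ) := by
            rw [ih (j + 1), poch_succ_eq j e, Polynomial.coe_mul]
            have h1 : ((P (e + 1) : Polynomial ℤ) : PowerSeries ℤ)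
                = ((poch 0 e : Polynomial ℤ) : PowerSeries ℤ) := by rw [poch_zero_eq]
            have h2 : Hs e 0 * (((B (j + e + 2) (j + 1) : Polynomial ℤ) : PowerSeries ℤ)
                * ((P (e + 1) : Polynomial ℤ) : PowerSeries ℤ))
                = ((beta e 0 : Polynomial ℤ) : PowerSeries ℤ)
                  * ((B (j + e + 2) (j + 1) : Polynomial ℤ) : PowerSeries ℤ) := by
              rw [h1, ← ih 0]; ring
            rw [show beta (e + 1) j
                = beta e 0 * B (j + e + 2) (j + 1)
                  - Polynomial.X ^ (2 * j + 2) * beta e (j + 1) from rfl]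
            rw [Polynomial.coe_sub, Polynomial.coe_mul, Polynomial.coe_mul,
              Polynomial.coe_pow, Polynomial.coe_X]
            rw [← h2]

lemma a_card (e n : ℕ) : a (e + 1) n = (W e 0 n).card := by
  unfold a
  apply Finset.card_bij (i := fun t _ => fun i => (t i : ℕ))
  · intro t ht
    obtain ⟨-, hsum, hval⟩ := Finset.mem_filter.1 ht
    refine mem_W.2 ⟨?_, ?_⟩
    · show (∑ i, (t i : ℕ)) + 0 * ((fun i => (t i : ℕ)) (Fin.last e)) = n
      rw [Nat.zero_mul, Nat.add_zero]; exact hsum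
    · intro i
      have hlt : (i.castSucc : Fin (e + 1)).val + 1 < e + 1 := by
        have := i.isLt; simp only [Fin.coe_castSucc]; omega
      have h := hval i.castSucc hlt
      have hidx : (⟨(i.castSucc : Fin (e + 1)).val + 1, hlt⟩ : Fin (e + 1)) = i.succ := by
        apply Fin.ext; simp
      rw [hidx] at h
      exact h
  · intro t1 h1 t2 h2 heq
    funext i
    exact Fin.val_injective (congrFun heq i)
  · intro u hu
    have hb : ∀ i, u i < n + 1 := by
      intro i
      have h1 := (Finset.mem_filter.1 hu).1
      rw [Fintype.mem_piFinset] at h1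
      exact Finset.mem_range.1 (h1 i)
    obtain ⟨hsum, hval⟩ := mem_W.1 hu
    rw [Nat.zero_mul, Nat.add_zero] at hsum
    refine ⟨fun i => ⟨u i, hb i⟩, Finset.mem_filter.2 ⟨Finset.mem_univ _, ?_, ?_⟩, rfl⟩
    · exact hsum
    · intro i hlt
      have h := hval ⟨i.val, by omega⟩
      have h1 : (⟨i.val, by omega⟩ : Fin e).succ = ⟨i.val + 1, hlt⟩ := by
        apply Fin.ext; simp
      have h2 : (⟨i.val, by omega⟩ : Fin e).castSucc = i := by
        apply Fin.ext; simp
      rw [h1, h2] at h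
      exact h

lemma A_eq (e : ℕ) : A (e + 1) = Hs e 0 := by
  ext n
  simp only [A, Hs, PowerSeries.coeff_mk, a_card]

lemma qPoch_eq (k : ℕ) : qPochPoly k = P k := by
  induction k with
  | zero => simp [qPochPoly, P_zero]
  | succ k ih =>
    unfold qPochPoly
    rw [Finset.prod_Icc_succ_top (by omega)]
    rw [P_succ]
    unfold qPochPoly at ih
    rw [ih]


end AdAux

open AdAux

/-- **Theorem.** For every positive integer `d` there is a polynomial `α_d ∈ ℤ[q]`
with constant coefficient `1`, degree exactly `(d-1)d`, leading coefficient
`(-1)^(d-1)`, such that `A_d(q) · (q;q)_d = α_d(q)` as formal power series. -/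
theorem Ad_gf (d : ℕ) (hd : 0 < d) :
    ∃ α : Polynomial ℤ,
      α.coeff 0 = 1 ∧
      α.natDegree = (d - 1) * d ∧
      α.coeff ((d - 1) * d) = (-1) ^ (d - 1) ∧
      A d * ((qPochPoly d : Polynomial ℤ) : PowerSeries ℤ) = ((α : Polynomial ℤ) : PowerSeries ℤ) := by
  obtain ⟨e, rfl⟩ : ∃ e, d = e + 1 := ⟨d - 1, by omega⟩
  have h11 : e + 1 - 1 = e := rfl
  have hD : e * (e + 1) + 2 * e * 0 = e * (e + 1) := by ring
  have htop := beta_coeff_top e 0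
  rw [hD] at htop
  refine ⟨beta e 0, beta_coeff_zero e 0, ?_, ?_, ?_⟩
  · rw [h11]
    refine le_antisymm ?_ ?_
    · have := beta_natDegree_le e 0
      omega
    · apply Polynomial.le_natDegree_of_ne_zero
      rw [htop]
      simp [pow_ne_zero]
  · rw [h11, htop]
  · rw [A_eq, qPoch_eq, ← poch_zero_eq]
    exact main e 0
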